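/- Let R be a symmetric positive semidefinite n×n real matrix, δ > 0, and Π an orthogonal projection matrix. If ‖Π R Π‖ ≤ 1, and ε > 0 is the smallest nonzero eigenvalue of R, then the spectral radius of Π R (δR + I)^{-1} Π is at most 1/(1 + εδ), which is strictly less than 1. -/

import Mathlib

open Matrix
open scoped ENNReal Matrix.Norms.L2Operator

lemma auxA {m n : Type*} [Fintype m] [Fintype n] [DecidableEq n] {𝕜 : Type*} [RCLike 𝕜]
    (A : Matrix m n 𝕜) {c : ℝ} (hc : 0 ≤ c)
    (h : ∀ x : EuclideanSpace 𝕜 n, ‖(EuclideanSpace.equiv m 𝕜).symm (A *ᵥ x)‖ ≤ c * ‖x‖) :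
    ‖A‖ ≤ c := by
  rw [Matrix.l2_opNorm_def]
  exact ContinuousLinearMap.opNorm_le_bound _ hc h

lemma auxB {m n : Type*} [Fintype m] [Fintype n] [DecidableEq n]
    (A : Matrix m n ℝ) : ‖A.map (algebraMap ℝ ℂ)‖ ≤ ‖A‖ := by
  refine auxA _ (norm_nonneg A) fun x => ?_
  have hre : ∀ j, ((A.map (algebraMap ℝ ℂ)) *ᵥ x) j =
      Complex.ofReal ((A *ᵥ fun i => (x i).re) j) +
        Complex.I * ((A *ᵥ fun i => (x i).im) j) := by
    intro j
    apply Complex.ext <;>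
      simp [mulVec, dotProduct, Complex.mul_re, Complex.mul_im, Complex.re_sum, Complex.im_sum,
        Finset.sum_add_distrib]
  have key : ‖(EuclideanSpace.equiv m ℂ).symm ((A.map (algebraMap ℝ ℂ)) *ᵥ x)‖ ^ 2 ≤
      (‖A‖ * ‖x‖) ^ 2 := by
    set a : EuclideanSpace ℝ n := (WithLp.equiv 2 _).symm fun i => (x i).re with ha
    set b : EuclideanSpace ℝ n := (WithLp.equiv 2 _).symm fun i => (x i).im with hb
    have hu := A.l2_opNorm_mulVec a
    have hw := A.l2_opNorm_mulVec b
    have h1 : ‖(EuclideanSpace.equiv m ℂ).symm ((A.map (algebraMap ℝ ℂ)) *ᵥ x)‖ ^ 2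
        = ‖(EuclideanSpace.equiv m ℝ).symm (A *ᵥ (WithLp.equiv 2 _) a)‖ ^ 2
          + ‖(EuclideanSpace.equiv m ℝ).symm (A *ᵥ (WithLp.equiv 2 _) b)‖ ^ 2 := by
      rw [EuclideanSpace.norm_eq, EuclideanSpace.norm_eq, EuclideanSpace.norm_eq,
        Real.sq_sqrt (by positivity), Real.sq_sqrt (by positivity),
        Real.sq_sqrt (by positivity), ← Finset.sum_add_distrib]
      refine Finset.sum_congr rfl fun j _ => ?_
      show ‖((A.map (algebraMap ℝ ℂ)) *ᵥ x) j‖ ^ 2 = _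
      rw [hre j]
      simp [ha, hb, Complex.sq_norm, Complex.normSq_apply,
        Real.norm_eq_abs, sq_abs]
      ring
    have hx2 : ‖x‖ ^ 2 = ‖a‖ ^ 2 + ‖b‖ ^ 2 := by
      rw [EuclideanSpace.norm_eq, EuclideanSpace.norm_eq, EuclideanSpace.norm_eq,
        Real.sq_sqrt (by positivity), Real.sq_sqrt (by positivity),
        Real.sq_sqrt (by positivity), ← Finset.sum_add_distrib]
      refine Finset.sum_congr rfl fun j _ => ?_
      simp [ha, hb, Complex.sq_norm, Complex.normSq_apply,
        Real.norm_eq_abs, sq_abs]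
      ring
    rw [h1]
    have h2 : ‖(EuclideanSpace.equiv m ℝ).symm (A *ᵥ (WithLp.equiv 2 _) a)‖ ^ 2 ≤ (‖A‖ * ‖a‖) ^ 2 := by
      exact pow_le_pow_left₀ (norm_nonneg _) hu 2
    have h3 : ‖(EuclideanSpace.equiv m ℝ).symm (A *ᵥ (WithLp.equiv 2 _) b)‖ ^ 2 ≤ (‖A‖ * ‖b‖) ^ 2 := by
      exact pow_le_pow_left₀ (norm_nonneg _) hw 2
    calc _ ≤ (‖A‖ * ‖a‖) ^ 2 + (‖A‖ * ‖b‖) ^ 2 := add_le_add h2 h3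
    _ = (‖A‖ * ‖x‖) ^ 2 := by rw [mul_pow, mul_pow, mul_pow, hx2]; ring
  exact (pow_le_pow_iff_left₀ (norm_nonneg _) (by positivity) two_ne_zero).mp key

theorem stmt_12' {n : ℕ} (R : Matrix (Fin n) (Fin n) ℝ) (hR : R.PosSemidef)
    (δ : ℝ) (hδ : 0 < δ)
    (Proj : Matrix (Fin n) (Fin n) ℝ) (hProjSymm : Projᵀ = Proj)
    (hProjIdem : Proj * Proj = Proj)
    (hnorm : ‖Proj * R * Proj‖ ≤ 1)
    (ε : ℝ) (hε : 0 < ε)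
    (hεeig : (∃ i, hR.1.eigenvalues i = ε) ∧
      ∀ i, hR.1.eigenvalues i ≠ 0 → ε ≤ hR.1.eigenvalues i) :
    ‖Proj * R * (δ • R + 1)⁻¹ * Proj‖ ≤ (1 + ε * δ)⁻¹ ∧
      (Proj * R * (δ • R + 1)⁻¹ * Proj)ᴴ = Proj * R * (δ • R + 1)⁻¹ * Proj := by
  classical
  set μ : Fin n → ℝ := hR.1.eigenvalues with hμdef
  set V : Matrix (Fin n) (Fin n) ℝ := (hR.1.eigenvectorUnitary : Matrix (Fin n) (Fin n) ℝ)
    with hVdef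
  have hVV : V * star V = 1 := mem_unitaryGroup_iff.mp hR.1.eigenvectorUnitary.2
  have hVV' : star V * V = 1 := mem_unitaryGroup_iff'.mp hR.1.eigenvectorUnitary.2
  have hconj : ∀ f g : Fin n → ℝ, (V * diagonal f * star V) * (V * diagonal g * star V)
      = V * diagonal (fun i => f i * g i) * star V := by
    intro f g
    simp only [mul_assoc]
    rw [← mul_assoc (star V) V (diagonal g * star V), hVV', one_mul,
      ← mul_assoc (diagonal f) (diagonal g) (star V), diagonal_mul_diagonal]
  have hspec : R = V * diagonal μ * star V := by
    simpa [RCLike.ofReal_real_eq_id, Function.comp] using hR.1.spectral_theorem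
  have hμ0 : ∀ i, 0 ≤ μ i := fun i => hR.eigenvalues_nonneg i
  set c : ℝ := 1 + ε * δ with hcdef
  have hc1 : 1 < c := by nlinarith
  have hc0 : 0 < c := by linarith
  set d : Fin n → ℝ := fun i => δ * μ i + 1 with hddef
  have hd0 : ∀ i, 0 < d i := fun i => by have := hμ0 i; simp only [hddef]; nlinarith
  have hdiagd : diagonal d = δ • diagonal μ + 1 := by
    rw [← diagonal_smul, ← diagonal_one, ← diagonal_add]
    congr 1
  have hsum : δ • R + 1 = V * diagonal d * star V := by
    rw [hdiagd, mul_add, add_mul, mul_one, hVV, mul_smul_comm, smul_mul_assoc, ← hspec]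
  have hinv : (δ • R + 1)⁻¹ = V * diagonal (fun i => (d i)⁻¹) * star V := by
    apply inv_eq_right_inv
    rw [hsum, hconj]
    have h2 : (fun i => d i * (d i)⁻¹) = fun _ => (1 : ℝ) :=
      funext fun i => mul_inv_cancel₀ (hd0 i).ne'
    rw [h2, diagonal_one, mul_one, hVV]
  have hRSdiag : R * (δ • R + 1)⁻¹ = V * diagonal (fun i => μ i * (d i)⁻¹) * star V := by
    rw [hinv]
    conv_lhs => rw [hspec]
    rw [hconj]
  have hRSpsd : PosSemidef (R * (δ • R + 1)⁻¹) := by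
    rw [hRSdiag, Matrix.star_eq_conjTranspose]
    exact (posSemidef_diagonal_iff.mpr fun i => by
      have := hμ0 i; have := (hd0 i); positivity).mul_mul_conjTranspose_same V
  have hdiffpsd : PosSemidef (c⁻¹ • R - R * (δ • R + 1)⁻¹) := by
    have heq : c⁻¹ • R - R * (δ • R + 1)⁻¹
        = V * diagonal (fun i => c⁻¹ * μ i - μ i * (d i)⁻¹) * star V := by
      rw [hRSdiag]
      conv_lhs => rw [hspec]
      have hsm : c⁻¹ • (V * diagonal μ * star V)
          = V * diagonal (fun i => c⁻¹ * μ i) * star V := by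
        rw [show (fun i => c⁻¹ * μ i) = c⁻¹ • μ from rfl, diagonal_smul, mul_smul_comm,
          smul_mul_assoc]
      rw [hsm, ← sub_mul, ← mul_sub, ← diagonal_sub]
    rw [heq, Matrix.star_eq_conjTranspose]
    refine (posSemidef_diagonal_iff.mpr fun i => ?_).mul_mul_conjTranspose_same V
    by_cases h0 : μ i = 0
    · simp [h0]
    · have hεi : ε ≤ μ i := hεeig.2 i h0
      have h1 : c ≤ d i := by simp only [hcdef, hddef]; nlinarith
      have h2 : (d i)⁻¹ ≤ c⁻¹ := inv_anti₀ hc0 h1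
      have := hμ0 i
      nlinarith
  have hquad : ∀ y : Fin n → ℝ, y ⬝ᵥ ((R * (δ • R + 1)⁻¹) *ᵥ y) ≤ c⁻¹ * (y ⬝ᵥ (R *ᵥ y)) := by
    intro y
    have h := hdiffpsd.dotProduct_mulVec_nonneg y
    rw [star_trivial, sub_mulVec, dotProduct_sub, smul_mulVec, dotProduct_smul,
      smul_eq_mul] at h
    linarith
  -- square root
  set T : Matrix (Fin n) (Fin n) ℝ := V * diagonal (fun i => Real.sqrt (μ i * (d i)⁻¹)) * star V
    with hTdef
  have hTT : T * T = R * (δ • R + 1)⁻¹ := by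
    rw [hTdef, hconj, hRSdiag]
    have hsq : (fun i => Real.sqrt (μ i * (d i)⁻¹) * Real.sqrt (μ i * (d i)⁻¹))
        = fun i => μ i * (d i)⁻¹ :=
      funext fun i => Real.mul_self_sqrt (by have := hμ0 i; have := hd0 i; positivity)
    rw [hsq]
  have hTh : Tᴴ = T := by
    rw [hTdef, Matrix.star_eq_conjTranspose, conjTranspose_mul, conjTranspose_mul,
      conjTranspose_conjTranspose, diagonal_conjTranspose]
    simp only [star_trivial, mul_assoc]
  have hTt : Tᵀ = T := by
    rw [← show Tᴴ = Tᵀ from by ext i j; simp [conjTranspose_apply]]; exact hTh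
  have hProjH : Projᴴ = Proj := by
    rw [show Projᴴ = Projᵀ from by ext i j; simp [conjTranspose_apply], hProjSymm]
  have hfact : Proj * R * (δ • R + 1)⁻¹ * Proj = (T * Proj)ᴴ * (T * Proj) := by
    calc Proj * R * (δ • R + 1)⁻¹ * Proj = Proj * (T * T) * Proj := by
          rw [hTT]; simp only [mul_assoc]
    _ = (T * Proj)ᴴ * (T * Proj) := by
          rw [conjTranspose_mul, hTh, hProjH]; simp only [mul_assoc]
  have hTP : ‖T * Proj‖ ≤ Real.sqrt c⁻¹ := by
    refine auxA _ (Real.sqrt_nonneg _) fun x => ?_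
    set y : Fin n → ℝ := (WithLp.equiv 2 _) x with hydef
    set w : Fin n → ℝ := Proj *ᵥ y with hwdef
    have hz2 : ‖(EuclideanSpace.equiv (Fin n) ℝ).symm ((T * Proj) *ᵥ y)‖ ^ 2
        = ((T * Proj) *ᵥ y) ⬝ᵥ ((T * Proj) *ᵥ y) := by
      rw [EuclideanSpace.norm_eq, Real.sq_sqrt (by positivity)]
      refine Finset.sum_congr rfl fun j _ => ?_
      simp [Real.norm_eq_abs, sq_abs, dotProduct]
      ring
    have hstep1 : ((T * Proj) *ᵥ y) ⬝ᵥ ((T * Proj) *ᵥ y)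
        = w ⬝ᵥ ((R * (δ • R + 1)⁻¹) *ᵥ w) := by
      rw [← mulVec_mulVec, ← hwdef]
      rw [Matrix.dotProduct_mulVec, ← Matrix.mulVec_transpose, hTt, dotProduct_comm,
        mulVec_mulVec, hTT]
    have hstep2 : w ⬝ᵥ (R *ᵥ w) = y ⬝ᵥ ((Proj * R * Proj) *ᵥ y) := by
      rw [hwdef, ← mulVec_mulVec, dotProduct_comm, Matrix.dotProduct_mulVec,
        ← Matrix.mulVec_transpose, hProjSymm, mulVec_mulVec, mulVec_mulVec, dotProduct_comm]
    have hstep3 : y ⬝ᵥ ((Proj * R * Proj) *ᵥ y) ≤ ‖x‖ ^ 2 := by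
      have hcs : y ⬝ᵥ ((Proj * R * Proj) *ᵥ y)
          ≤ ‖x‖ * ‖(EuclideanSpace.equiv (Fin n) ℝ).symm ((Proj * R * Proj) *ᵥ y)‖ := by
        have := real_inner_le_norm x ((EuclideanSpace.equiv (Fin n) ℝ).symm ((Proj * R * Proj) *ᵥ y))
        refine le_trans (le_of_eq ?_) this
        rw [PiLp.inner_apply]
        simp [dotProduct, RCLike.inner_apply, hydef]
        exact Finset.sum_congr rfl fun _ _ => mul_comm _ _
      refine hcs.trans ?_
      have hmv := (Proj * R * Proj).l2_opNorm_mulVec x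
      calc ‖x‖ * ‖(EuclideanSpace.equiv (Fin n) ℝ).symm ((Proj * R * Proj) *ᵥ y)‖
          ≤ ‖x‖ * (‖Proj * R * Proj‖ * ‖x‖) := by
            refine mul_le_mul_of_nonneg_left ?_ (norm_nonneg x)
            exact hmv
      _ ≤ ‖x‖ * (1 * ‖x‖) := by
            refine mul_le_mul_of_nonneg_left (mul_le_mul_of_nonneg_right hnorm (norm_nonneg x))
              (norm_nonneg x)
      _ = ‖x‖ ^ 2 := by ring
    have hkey : ‖(EuclideanSpace.equiv (Fin n) ℝ).symm ((T * Proj) *ᵥ y)‖ ^ 2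
        ≤ (Real.sqrt c⁻¹ * ‖x‖) ^ 2 := by
      rw [hz2, hstep1]
      calc w ⬝ᵥ ((R * (δ • R + 1)⁻¹) *ᵥ w) ≤ c⁻¹ * (w ⬝ᵥ (R *ᵥ w)) := hquad w
      _ = c⁻¹ * (y ⬝ᵥ ((Proj * R * Proj) *ᵥ y)) := by rw [hstep2]
      _ ≤ c⁻¹ * ‖x‖ ^ 2 := by
            exact mul_le_mul_of_nonneg_left hstep3 (inv_nonneg.mpr hc0.le)
      _ = (Real.sqrt c⁻¹ * ‖x‖) ^ 2 := by
            rw [mul_pow, Real.sq_sqrt (inv_nonneg.mpr hc0.le)]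
    exact (pow_le_pow_iff_left₀ (norm_nonneg _) (by positivity) two_ne_zero).mp hkey
  constructor
  · rw [hfact, Matrix.l2_opNorm_conjTranspose_mul_self]
    calc ‖T * Proj‖ * ‖T * Proj‖ ≤ Real.sqrt c⁻¹ * Real.sqrt c⁻¹ :=
          mul_le_mul hTP hTP (norm_nonneg _) (Real.sqrt_nonneg _)
    _ = c⁻¹ := Real.mul_self_sqrt (inv_nonneg.mpr hc0.le)
  · rw [hfact, conjTranspose_mul, conjTranspose_conjTranspose]


/-- The spectral radius of a real matrix: the maximum modulus of its complex eigenvalues. -/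
noncomputable def matSpecRad {ι : Type*} [Fintype ι] [DecidableEq ι]
    (Q : Matrix ι ι ℝ) : ℝ≥0∞ :=
  spectralRadius ℂ (Q.map (algebraMap ℝ ℂ))

theorem stmt_12 {n : ℕ} (R : Matrix (Fin n) (Fin n) ℝ) (hR : R.PosSemidef)
    (δ : ℝ) (hδ : 0 < δ)
    (Proj : Matrix (Fin n) (Fin n) ℝ) (hProjSymm : Projᵀ = Proj)
    (hProjIdem : Proj * Proj = Proj)
    (hnorm : ‖Proj * R * Proj‖ ≤ 1)
    (ε : ℝ) (hε : 0 < ε)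
    (hεeig : (∃ i, hR.1.eigenvalues i = ε) ∧
      ∀ i, hR.1.eigenvalues i ≠ 0 → ε ≤ hR.1.eigenvalues i) :
    matSpecRad (Proj * R * (δ • R + 1)⁻¹ * Proj) ≤ ENNReal.ofReal (1 / (1 + ε * δ)) ∧
      matSpecRad (Proj * R * (δ • R + 1)⁻¹ * Proj) < 1 := by
  obtain ⟨hQn, hQsym⟩ := stmt_12' R hR δ hδ Proj hProjSymm hProjIdem hnorm ε hε hεeig
  set Q : Matrix (Fin n) (Fin n) ℝ := Proj * R * (δ • R + 1)⁻¹ * Proj with hQdef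
  have hc0 : (0:ℝ) < 1 + ε * δ := by nlinarith
  set M : Matrix (Fin n) (Fin n) ℂ := Q.map (algebraMap ℝ ℂ) with hMdef
  have hQH : Mᴴ = M := by
    rw [hMdef, ← Matrix.conjTranspose_map (algebraMap ℝ ℂ) (fun a => by simp), hQsym]
  have hbound : ∀ k ∈ spectrum ℂ M, ‖k‖ ≤ (1 + ε * δ)⁻¹ := by
    intro k hk
    rw [← AlgEquiv.spectrum_eq (Matrix.toLinAlgEquiv <| Pi.basisFun ℂ (Fin n)),
      ← Module.End.hasEigenvalue_iff_mem_spectrum] at hk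
    obtain ⟨v, hv⟩ := hk.exists_hasEigenvector
    have hMv : M *ᵥ v = k • v := by
      have h := hv.apply_eq_smul
      rw [Matrix.toLinAlgEquiv_apply] at h
      refine funext fun i => ?_
      have h2 := congrFun h i
      have hrep : ⇑((Pi.basisFun ℂ (Fin n)).repr v) = v := funext fun i => Pi.basisFun_repr (x := v) (i := i)
      simpa [hrep, Matrix.toLin_apply, Pi.basisFun_apply, Pi.basisFun_repr, Pi.single_apply,
        Finset.sum_apply] using h2
    have hvne : v ≠ 0 := hv.2
    -- t = star v ⬝ᵥ v is a positive real
    have ht : star v ⬝ᵥ v = ((∑ i, Complex.normSq (v i) : ℝ) : ℂ) := by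
      push_cast
      simp [dotProduct, Complex.normSq_eq_conj_mul_self, RCLike.star_def]
    have ht0 : (∑ i, Complex.normSq (v i)) ≠ 0 := by
      have : ∃ i, v i ≠ 0 := by
        by_contra h
        push_neg at h
        exact hvne (funext h)
      obtain ⟨i, hi⟩ := this
      have : 0 < ∑ j, Complex.normSq (v j) :=
        Finset.sum_pos' (fun j _ => Complex.normSq_nonneg _)
          ⟨i, Finset.mem_univ i, Complex.normSq_pos.mpr hi⟩
      exact this.ne'
    -- k is real
    have hs : star (star v ⬝ᵥ (M *ᵥ v)) = star v ⬝ᵥ (M *ᵥ v) := by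
      conv_lhs => rw [star_dotProduct, star_star]
      rw [star_mulVec, hQH]
      rw [← Matrix.dotProduct_mulVec]
    have hkr : star k = k := by
      rw [hMv, dotProduct_smul, smul_eq_mul, ht] at hs
      have hs' : star k * ((∑ i, Complex.normSq (v i) : ℝ) : ℂ)
          = k * ((∑ i, Complex.normSq (v i) : ℝ) : ℂ) := by
        have h3 : star (k * ((∑ i, Complex.normSq (v i) : ℝ) : ℂ))
            = star k * ((∑ i, Complex.normSq (v i) : ℝ) : ℂ) := by
          rw [star_mul']
          congr 1
          exact Complex.conj_ofReal _
        rw [← h3, hs]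
      exact mul_right_cancel₀ (by exact_mod_cast ht0) hs'
    have hkre : ((k.re : ℝ) : ℂ) = k := Complex.conj_eq_iff_re.mp hkr
    -- extract a real eigenvector
    have hcomp : ∀ i, (∑ j, (Q i j : ℂ) * v j) = (k.re : ℂ) * v i := by
      intro i
      have := congrFun hMv i
      simpa [hMdef, mulVec, dotProduct, hkre, Pi.smul_apply, smul_eq_mul] using this
    have ha : Q *ᵥ (fun j => (v j).re) = k.re • (fun j => (v j).re) := by
      funext i
      have := congrArg Complex.re (hcomp i)
      simpa [mulVec, dotProduct, Complex.re_sum, Complex.mul_re, Pi.smul_apply,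
        smul_eq_mul] using this
    have hb : Q *ᵥ (fun j => (v j).im) = k.re • (fun j => (v j).im) := by
      funext i
      have := congrArg Complex.im (hcomp i)
      simpa [mulVec, dotProduct, Complex.im_sum, Complex.mul_im, Pi.smul_apply,
        smul_eq_mul] using this
    have hab : (fun j => (v j).re) ≠ (0 : Fin n → ℝ) ∨ (fun j => (v j).im) ≠ (0 : Fin n → ℝ) := by
      by_contra h
      push_neg at h
      refine hvne (funext fun i => ?_)
      have h1 := congrFun h.1 i
      have h2 := congrFun h.2 i
      exact Complex.ext (by simpa using h1) (by simpa using h2)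
    obtain ⟨u, hu, hune⟩ : ∃ u : Fin n → ℝ, Q *ᵥ u = k.re • u ∧ u ≠ 0 := by
      rcases hab with h | h
      · exact ⟨_, ha, h⟩
      · exact ⟨_, hb, h⟩
    -- bound |k.re| by the operator norm
    set x : EuclideanSpace ℝ (Fin n) := (WithLp.equiv 2 _).symm u with hxdef
    have hx0 : 0 < ‖x‖ := by
      rw [norm_pos_iff]
      intro h
      exact hune (congrArg (WithLp.equiv 2 _) h)
    have hmv := Q.l2_opNorm_mulVec x
    have hL : ‖(EuclideanSpace.equiv (Fin n) ℝ).symm (Q *ᵥ u)‖ = |k.re| * ‖x‖ := by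
      rw [hu]
      have : (EuclideanSpace.equiv (Fin n) ℝ).symm (k.re • u) = k.re • x := rfl
      rw [this, norm_smul, Real.norm_eq_abs]
    have hQu : ‖(EuclideanSpace.equiv (Fin n) ℝ).symm (Q *ᵥ u)‖ ≤ ‖Q‖ * ‖x‖ := hmv
    have habs : |k.re| ≤ ‖Q‖ := by
      have := hL ▸ hQu
      exact le_of_mul_le_mul_right this hx0
    calc ‖k‖ = |k.re| := by rw [← hkre]; simp [Real.norm_eq_abs]
    _ ≤ ‖Q‖ := habs
    _ ≤ (1 + ε * δ)⁻¹ := hQn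
  have hrad : spectralRadius ℂ M ≤ ENNReal.ofReal ((1 + ε * δ)⁻¹) := by
    rw [spectralRadius]
    refine iSup₂_le fun k hk => ?_
    rw [show (‖k‖₊ : ℝ≥0∞) = ENNReal.ofReal ‖k‖ from (ofReal_norm k).symm]
    exact ENNReal.ofReal_le_ofReal (hbound k hk)
  have hlt1 : ((1:ℝ) + ε * δ)⁻¹ < 1 := by
    rw [inv_lt_one_iff₀]
    right
    nlinarith
  constructor
  · rw [show matSpecRad Q = spectralRadius ℂ M from rfl, one_div]
    exact hrad
  · rw [show matSpecRad Q = spectralRadius ℂ M from rfl]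
    exact lt_of_le_of_lt hrad (ENNReal.ofReal_lt_one.mpr hlt1)
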